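/- Let q be an odd prime power, and for j ∈ F_q let S_j ⊆ F_q^d be the sphere {‖x‖ = j}. Then Ŝ_j(m) = q^{−1}δ₀(m) + q^{−d−1} η(−1)^d G₁^d Σ_{r∈F_q*} η(r)^d χ(jr + ‖m‖/(4r)), where η is the quadratic character and G₁ the Gauss sum. -/

import Mathlib

open Finset Matrix

section Aux

variable {F : Type} [Field F] [Fintype F] [DecidableEq F]

private lemma addChar_sum_eq_prod {ι : Type*} (χ : AddChar F ℂ) (s : Finset ι) (f : ι → F) :
    χ (∑ i ∈ s, f i) = ∏ i ∈ s, χ (f i) := by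
  classical
  clear ‹Fintype F› ‹DecidableEq F›
  induction s using Finset.induction with
  | empty => simp
  | insert _ _ h ih =>
    rw [Finset.sum_insert h, AddChar.map_add_eq_mul, ih, Finset.prod_insert h]

private lemma sum_chi_mul (χ : AddChar F ℂ) (hχ : χ ≠ 1) (b : F) :
    ∑ r : F, χ (r * b) = if b = 0 then (Fintype.card F : ℂ) else 0 :=
  by simpa using AddChar.sum_mulShift b (AddChar.IsPrimitive.of_ne_one hχ)

/-- The Gauss sum `G₁ = ∑_{t ≠ 0} η(t) χ(t)`. -/
private noncomputable def GS (χ : AddChar F ℂ) : ℂ :=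
  ∑ t ∈ Finset.univ.filter (fun t : F => t ≠ 0), (quadraticChar F t : ℂ) * χ t

private lemma GS_eq (χ : AddChar F ℂ) :
    GS χ = ∑ t : F, (quadraticChar F t : ℂ) * χ t := by
  refine Finset.sum_filter_of_ne fun x _ hx ↦ ?_
  intro h0
  simp [h0] at hx

private lemma sum_eta (χ : AddChar F ℂ) {r : F} (hr : r ≠ 0) :
    ∑ t : F, (quadraticChar F t : ℂ) * χ (r * t) = (quadraticChar F r : ℂ) * GS χ := by
  have hsq : ((quadraticChar F r : ℂ)) * (quadraticChar F r : ℂ) = 1 := by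
    have h := quadraticChar_sq_one (F := F) hr
    rw [pow_two] at h
    exact_mod_cast congrArg (Int.cast : ℤ → ℂ) h
  have key : ∑ t : F, (quadraticChar F (r * t) : ℂ) * χ (r * t)
      = ∑ t : F, (quadraticChar F t : ℂ) * χ t := by
    refine Fintype.sum_equiv (Equiv.mulLeft₀ r hr) _ _ fun t ↦ ?_
    simp [Equiv.mulLeft₀]
  calc ∑ t : F, (quadraticChar F t : ℂ) * χ (r * t)
      = (quadraticChar F r : ℂ) * ∑ t : F, (quadraticChar F (r * t) : ℂ) * χ (r * t) := by
        rw [Finset.mul_sum]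
        refine Finset.sum_congr rfl fun t _ ↦ ?_
        have hmul : ((quadraticChar F (r * t) : ℤ) : ℂ)
            = (quadraticChar F r : ℂ) * (quadraticChar F t : ℂ) := by
          exact_mod_cast congrArg (Int.cast : ℤ → ℂ) ((quadraticChar F).map_mul r t)
        calc ((quadraticChar F t : ℤ) : ℂ) * χ (r * t)
            = ((quadraticChar F r : ℂ) * (quadraticChar F r : ℂ))
                * (quadraticChar F t : ℂ) * χ (r * t) := by rw [hsq, one_mul]
          _ = (quadraticChar F r : ℂ) * ((quadraticChar F (r * t) : ℤ) : ℂ) * χ (r * t) := by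
              rw [hmul]; ring
          _ = (quadraticChar F r : ℂ) * (((quadraticChar F (r * t) : ℤ) : ℂ) * χ (r * t)) := by
              ring
    _ = (quadraticChar F r : ℂ) * GS χ := by rw [key, GS_eq]

private lemma key0 (hq : ringChar F ≠ 2) (χ : AddChar F ℂ) (hχ : χ ≠ 1) {r : F} (hr : r ≠ 0) :
    ∑ y : F, χ (r * y ^ 2) = (quadraticChar F r : ℂ) * GS χ := by
  have fiber : ∑ y : F, χ (r * y ^ 2)
      = ∑ t : F, ∑ y ∈ Finset.univ.filter (fun y : F => y ^ 2 = t), χ (r * y ^ 2) :=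
    (Finset.sum_fiberwise_of_maps_to (fun x _ ↦ Finset.mem_univ _) _).symm
  have card_eq : ∀ t : F,
      ((Finset.univ.filter (fun y : F => y ^ 2 = t)).card : ℂ)
        = (quadraticChar F t : ℂ) + 1 := by
    intro t
    have h := quadraticChar_card_sqrts hq t
    rw [Set.toFinset_setOf] at h
    exact_mod_cast congrArg (Int.cast : ℤ → ℂ) h
  have inner : ∀ t : F, ∑ y ∈ Finset.univ.filter (fun y : F => y ^ 2 = t), χ (r * y ^ 2)
      = ((quadraticChar F t : ℂ) + 1) * χ (r * t) := by
    intro t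
    have hcongr : ∑ y ∈ Finset.univ.filter (fun y : F => y ^ 2 = t), χ (r * y ^ 2)
        = ∑ _y ∈ Finset.univ.filter (fun y : F => y ^ 2 = t), χ (r * t) :=
      Finset.sum_congr rfl fun y hy ↦ by rw [(Finset.mem_filter.mp hy).2]
    rw [hcongr, Finset.sum_const, nsmul_eq_mul, card_eq t]
  rw [fiber]
  simp_rw [inner, add_mul, one_mul, Finset.sum_add_distrib]
  have h2 : ∑ t : F, χ (r * t) = 0 := by
    have := sum_chi_mul χ hχ r
    simp only [hr, if_false] at this
    calc ∑ t : F, χ (r * t) = ∑ t : F, χ (t * r) := by simp_rw [mul_comm]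
      _ = 0 := this
  rw [h2, add_zero, sum_eta χ hr]

private lemma key1 (hq : ringChar F ≠ 2) (χ : AddChar F ℂ) (hχ : χ ≠ 1) {r : F} (hr : r ≠ 0)
    (b : F) :
    ∑ y : F, χ (r * y ^ 2 + b * y)
      = (quadraticChar F r : ℂ) * GS χ * χ (-(b ^ 2) / (4 * r)) := by
  have h2 : (2 : F) ≠ 0 := Ring.two_ne_zero hq
  have h4 : (4 : F) ≠ 0 := by
    have h : (4 : F) = 2 * 2 := by norm_num
    rw [h]; exact mul_ne_zero h2 h2
  have shift : ∑ y : F, χ (r * (y - b / (2 * r)) ^ 2 + b * (y - b / (2 * r)))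
      = ∑ y : F, χ (r * y ^ 2 + b * y) :=
    Fintype.sum_equiv (Equiv.subRight (b / (2 * r))) _ _ fun y ↦ rfl
  have arg : ∀ y : F, r * (y - b / (2 * r)) ^ 2 + b * (y - b / (2 * r))
      = r * y ^ 2 + -(b ^ 2) / (4 * r) := by
    intro y
    field_simp
    ring
  rw [← shift]
  simp_rw [arg, AddChar.map_add_eq_mul, ← Finset.sum_mul, key0 hq χ hχ hr]

private lemma key_delta (χ : AddChar F ℂ) (hχ : χ ≠ 1) {d : ℕ} (m : Fin d → F) :
    ∑ x : Fin d → F, χ (-(m ⬝ᵥ x)) = if m = 0 then ((Fintype.card F : ℂ)) ^ d else 0 := by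
  have harg : ∀ x : Fin d → F, -(m ⬝ᵥ x) = ∑ i, x i * (-(m i)) := by
    intro x
    rw [dotProduct, ← Finset.sum_neg_distrib]
    exact Finset.sum_congr rfl fun i _ ↦ by ring
  simp_rw [harg, addChar_sum_eq_prod]
  have hprod := Finset.prod_univ_sum (fun _ : Fin d => (Finset.univ : Finset F))
    (fun i y => χ (y * -(m i)))
  rw [Fintype.piFinset_univ] at hprod
  rw [← hprod]
  simp_rw [sum_chi_mul χ hχ, neg_eq_zero]
  by_cases hm : m = 0
  · subst hm
    simp
  · rw [if_neg hm]
    obtain ⟨i, hi⟩ := Function.ne_iff.mp hm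
    have hi' : m i ≠ 0 := by simpa using hi
    exact Finset.prod_eq_zero (Finset.mem_univ i) (by simp [hi'])

private lemma key2 (hq : ringChar F ≠ 2) (χ : AddChar F ℂ) (hχ : χ ≠ 1) {d : ℕ} {r : F}
    (hr : r ≠ 0) (m : Fin d → F) :
    ∑ x : Fin d → F, χ (r * (x ⬝ᵥ x) - m ⬝ᵥ x)
      = (quadraticChar F r : ℂ) ^ d * (GS χ) ^ d * χ (-(m ⬝ᵥ m) / (4 * r)) := by
  have harg : ∀ x : Fin d → F,
      r * (x ⬝ᵥ x) - m ⬝ᵥ x = ∑ i, (r * x i ^ 2 + (-(m i)) * x i) := by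
    intro x
    simp only [dotProduct, Finset.mul_sum, ← Finset.sum_sub_distrib]
    exact Finset.sum_congr rfl fun i _ ↦ by ring
  simp_rw [harg, addChar_sum_eq_prod]
  have hprod := Finset.prod_univ_sum (fun _ : Fin d => (Finset.univ : Finset F))
    (fun i y => χ (r * y ^ 2 + -(m i) * y))
  rw [Fintype.piFinset_univ] at hprod
  rw [← hprod]
  simp_rw [key1 hq χ hχ hr]
  rw [Finset.prod_mul_distrib, Finset.prod_mul_distrib, Finset.prod_const, Finset.prod_const,
    Finset.card_univ, Fintype.card_fin, ← addChar_sum_eq_prod]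
  have harg2 : (∑ i, -((-(m i)) ^ 2) / (4 * r)) = -(m ⬝ᵥ m) / (4 * r) := by
    calc ∑ i, -((-(m i)) ^ 2) / (4 * r) = ∑ i, -(m i * m i) / (4 * r) :=
          Finset.sum_congr rfl fun i _ ↦ by ring
      _ = (∑ i, -(m i * m i)) / (4 * r) := by rw [Finset.sum_div]
      _ = -(m ⬝ᵥ m) / (4 * r) := by rw [dotProduct, Finset.sum_neg_distrib]
  rw [harg2]

end Aux

/-- Explicit Fourier decay of spheres: for the sphere `S_j ⊆ F_q^d`,
`Ŝ_j(m) = q^{−1}δ₀(m) + q^{−d−1} η(−1)^d G₁^d Σ_{r≠0} η(r)^d χ(jr + ‖m‖/(4r))`. -/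
theorem stmt_9 (F : Type) [Field F] [Fintype F] [DecidableEq F]
    (hq : ringChar F ≠ 2)
    (χ : AddChar F ℂ) (hχ : χ ≠ 1)
    (d : ℕ)
    (Shat : F → (Fin d → F) → ℂ)
    (hS : ∀ j m, Shat j m
      = ((Fintype.card F : ℂ) ^ d)⁻¹ *
          ∑ x ∈ Finset.univ.filter (fun x : Fin d → F => x ⬝ᵥ x = j),
            χ (-(m ⬝ᵥ x)))
    (j : F) (m : Fin d → F) :
    Shat j m
      = (Fintype.card F : ℂ)⁻¹ * (if m = 0 then 1 else 0)
        + ((Fintype.card F : ℂ) ^ (d + 1))⁻¹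
          * (quadraticChar F (-1) : ℂ) ^ d
          * (∑ t ∈ Finset.univ.filter (fun t : F => t ≠ 0),
              ((quadraticChar F t : ℂ)) * χ t) ^ d
          * ∑ r ∈ Finset.univ.filter (fun r : F => r ≠ 0),
              ((quadraticChar F r : ℂ)) ^ d * χ (j * r + (m ⬝ᵥ m) / (4 * r)) := by
  have hq0 : (Fintype.card F : ℂ) ≠ 0 := Nat.cast_ne_zero.mpr Fintype.card_ne_zero
  set q : ℂ := (Fintype.card F : ℂ) with hqdef
  set T : ℂ := ∑ x ∈ Finset.univ.filter (fun x : Fin d → F => x ⬝ᵥ x = j),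
      χ (-(m ⬝ᵥ x)) with hT
  have hA : ∀ x : Fin d → F, q * (if x ⬝ᵥ x = j then χ (-(m ⬝ᵥ x)) else 0)
      = ∑ r : F, χ (r * (x ⬝ᵥ x) - m ⬝ᵥ x) * χ (-(r * j)) := by
    intro x
    have hterm : ∀ r : F, χ (r * (x ⬝ᵥ x) - m ⬝ᵥ x) * χ (-(r * j))
        = χ (-(m ⬝ᵥ x)) * χ (r * ((x ⬝ᵥ x) - j)) := by
      intro r
      rw [← AddChar.map_add_eq_mul, ← AddChar.map_add_eq_mul]
      congr 1
      ring
    simp_rw [hterm]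
    rw [← Finset.mul_sum, sum_chi_mul χ hχ]
    simp only [sub_eq_zero]
    by_cases hxj : x ⬝ᵥ x = j
    · rw [if_pos hxj, if_pos hxj]; ring
    · rw [if_neg hxj, if_neg hxj]; ring
  have hqT : q * T = ∑ r : F, (∑ x : Fin d → F, χ (r * (x ⬝ᵥ x) - m ⬝ᵥ x)) * χ (-(r * j)) := by
    rw [hT, Finset.sum_filter, Finset.mul_sum]
    simp_rw [hA]
    rw [Finset.sum_comm]
    exact Finset.sum_congr rfl fun r _ ↦ (Finset.sum_mul _ _ _).symm
  have hzero : (∑ x : Fin d → F, χ ((0 : F) * (x ⬝ᵥ x) - m ⬝ᵥ x)) * χ (-((0 : F) * j))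
      = if m = 0 then q ^ d else 0 := by
    simp only [zero_mul, zero_sub, neg_zero, AddChar.map_zero_eq_one, mul_one]
    exact key_delta χ hχ m
  have hsplit : q * T = (if m = 0 then q ^ d else 0)
      + ∑ r ∈ Finset.univ.filter (fun r : F => r ≠ 0),
          (quadraticChar F r : ℂ) ^ d * (GS χ) ^ d * χ (-(j * r + (m ⬝ᵥ m) / (4 * r))) := by
    rw [hqT, ← Finset.add_sum_erase Finset.univ _ (Finset.mem_univ (0 : F)), hzero,
      Finset.filter_ne']
    congr 1
    refine Finset.sum_congr rfl fun r hr ↦ ?_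
    have hr0 : r ≠ 0 := Finset.ne_of_mem_erase hr
    rw [key2 hq χ hχ hr0 m, mul_assoc, mul_assoc, ← AddChar.map_add_eq_mul]
    rw [mul_assoc]
    congr 2
    rw [neg_add, neg_div]
    ring_nf
  have hreindex : (quadraticChar F (-1) : ℂ) ^ d * (∑ r ∈ Finset.univ.filter (fun r : F => r ≠ 0),
          (quadraticChar F r : ℂ) ^ d * χ (j * r + (m ⬝ᵥ m) / (4 * r)))
      = ∑ r ∈ Finset.univ.filter (fun r : F => r ≠ 0),
          (quadraticChar F r : ℂ) ^ d * χ (-(j * r + (m ⬝ᵥ m) / (4 * r))) := by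
    rw [Finset.mul_sum]
    refine Finset.sum_nbij' (fun r ↦ -r) (fun r ↦ -r) ?_ ?_ ?_ ?_ ?_
    · intro r hr
      simp only [Finset.mem_filter, Finset.mem_univ, true_and] at hr ⊢
      exact neg_ne_zero.mpr hr
    · intro r hr
      simp only [Finset.mem_filter, Finset.mem_univ, true_and] at hr ⊢
      exact neg_ne_zero.mpr hr
    · intro r _; exact neg_neg r
    · intro r _; exact neg_neg r
    · intro r hr
      simp only [Finset.mem_filter, Finset.mem_univ, true_and] at hr
      have hmul : ((quadraticChar F (-r) : ℤ) : ℂ)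
          = (quadraticChar F (-1) : ℂ) * (quadraticChar F r : ℂ) := by
        have h := (quadraticChar F).map_mul (-1 : F) r
        rw [show (-1 : F) * r = -r by ring] at h
        exact_mod_cast congrArg (Int.cast : ℤ → ℂ) h
      have harg : -(j * -r + (m ⬝ᵥ m) / (4 * -r)) = j * r + (m ⬝ᵥ m) / (4 * r) := by
        rw [show (4 : F) * -r = -(4 * r) by ring, div_neg]
        ring
      rw [hmul, harg, mul_pow]
      ring
  have hfinal : T = q⁻¹ * (q * T) := by
    rw [← mul_assoc, inv_mul_cancel₀ hq0, one_mul]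
  rw [hS, ← hT, hfinal, hsplit]
  have hGS : GS χ = ∑ t ∈ Finset.univ.filter (fun t : F => t ≠ 0),
      ((quadraticChar F t : ℂ)) * χ t := rfl
  have hsum_pull : ∑ r ∈ Finset.univ.filter (fun r : F => r ≠ 0),
        (quadraticChar F r : ℂ) ^ d * (GS χ) ^ d * χ (-(j * r + (m ⬝ᵥ m) / (4 * r)))
      = (GS χ) ^ d * ∑ r ∈ Finset.univ.filter (fun r : F => r ≠ 0),
          (quadraticChar F r : ℂ) ^ d * χ (-(j * r + (m ⬝ᵥ m) / (4 * r))) := by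
    rw [Finset.mul_sum]
    exact Finset.sum_congr rfl fun r _ ↦ by ring
  rw [hsum_pull, ← hreindex, ← hGS]
  by_cases hm : m = 0
  · rw [if_pos hm, if_pos hm]
    field_simp
    ring
  · rw [if_neg hm, if_neg hm]
    field_simp
    ring
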